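/- The 5-dimensional nilpotent commutative associative algebra A₀₂ degenerates to A₀₅: the structure λ of A₀₅ lies in the closure of the GL(5,ℂ)-orbit O(μ) of the structure μ of A₀₂ (closure in the standard topology on the space of bilinear maps ℂ⁵ × ℂ⁵ → ℂ⁵). -/
import Mathlib

open ContinuousLinearMap

/-- The underlying space `ℂⁿ`. -/
abbrev Vn (n : ℕ) := Fin n → ℂ

/-- The space of bilinear maps `ℂⁿ × ℂⁿ → ℂⁿ` (as continuous linear maps in two
arguments), carrying its standard topology as a finite-dimensional complex vector space. -/
abbrev Bil (n : ℕ) := Vn n →L[ℂ] Vn n →L[ℂ] Vn n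

/-- The action of `GL(n, ℂ)` on bilinear maps: `(g · μ)(x, y) = g (μ (g⁻¹ x) (g⁻¹ y))`. -/
noncomputable def act {n : ℕ} (g : Vn n ≃L[ℂ] Vn n) (μ : Bil n) : Bil n :=
  ((compL ℂ (Vn n) (Vn n) (Vn n)).flip (g.symm : Vn n →L[ℂ] Vn n)).comp
    (((compL ℂ (Vn n) (Vn n) (Vn n)) (g : Vn n →L[ℂ] Vn n)).comp
      (μ.comp (g.symm : Vn n →L[ℂ] Vn n)))

@[simp] lemma act_apply {n : ℕ} (g : Vn n ≃L[ℂ] Vn n) (μ : Bil n) (x y : Vn n) :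
    act g μ x y = g (μ (g.symm x) (g.symm y)) := rfl

/-- The orbit `O(μ)` of a bilinear map under the `GL(n, ℂ)`-action. -/
noncomputable def orbit {n : ℕ} (μ : Bil n) : Set (Bil n) :=
  {ν | ∃ g : Vn n ≃L[ℂ] Vn n, ν = act g μ}

/-- The standard basis `e₁, …, e₅` of `ℂ⁵` (zero-indexed: `e i` is `e_{i+1}`). -/
def e (i : Fin 5) : Vn 5 := Pi.single i 1

/-- Multiplication table of the algebra `𝐀02` (entry `(i, j)` is `eᵢ · eⱼ`). -/
def tblA02 : Fin 5 → Fin 5 → Vn 5 :=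
  ![![e 2, 0, e 3, e 4, 0],
   ![0, e 4, 0, 0, 0],
   ![e 3, 0, e 4, 0, 0],
   ![e 4, 0, 0, 0, 0],
   ![0, 0, 0, 0, 0]]

/-- Multiplication table of the algebra `𝐀05` (entry `(i, j)` is `eᵢ · eⱼ`). -/
def tblA05 : Fin 5 → Fin 5 → Vn 5 :=
  ![![e 1, e 2, e 3, 0, 0],
   ![e 2, e 3, 0, 0, 0],
   ![e 3, 0, 0, 0, 0],
   ![0, 0, 0, 0, 0],
   ![0, 0, 0, 0, 0]]

lemma e_at (i k : Fin 5) : e i k = if k = i then 1 else 0 := Pi.single_apply i 1 k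

/-- Two bilinear maps agreeing on basis vectors are equal. -/
lemma bil_ext {A B : Bil 5} (h : ∀ i j, A (e i) (e j) = B (e i) (e j)) : A = B := by
  have hb : ∀ i : Fin 5, (Pi.basisFun ℂ (Fin 5)) i = e i := by
    intro i; simp [e, Pi.basisFun_apply]
  apply ContinuousLinearMap.coe_injective
  apply Module.Basis.ext (Pi.basisFun ℂ (Fin 5))
  intro i
  apply ContinuousLinearMap.coe_injective
  apply Module.Basis.ext (Pi.basisFun ℂ (Fin 5))
  intro j
  simpa [hb] using h i j

lemma tblA02_00 : tblA02 0 0 = e 2 := rfl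
lemma tblA02_01 : tblA02 0 1 = 0 := rfl
lemma tblA02_02 : tblA02 0 2 = e 3 := rfl
lemma tblA02_03 : tblA02 0 3 = e 4 := rfl
lemma tblA02_04 : tblA02 0 4 = 0 := rfl
lemma tblA02_10 : tblA02 1 0 = 0 := rfl
lemma tblA02_11 : tblA02 1 1 = e 4 := rfl
lemma tblA02_12 : tblA02 1 2 = 0 := rfl
lemma tblA02_13 : tblA02 1 3 = 0 := rfl
lemma tblA02_14 : tblA02 1 4 = 0 := rfl
lemma tblA02_20 : tblA02 2 0 = e 3 := rfl
lemma tblA02_21 : tblA02 2 1 = 0 := rfl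
lemma tblA02_22 : tblA02 2 2 = e 4 := rfl
lemma tblA02_23 : tblA02 2 3 = 0 := rfl
lemma tblA02_24 : tblA02 2 4 = 0 := rfl
lemma tblA02_30 : tblA02 3 0 = e 4 := rfl
lemma tblA02_31 : tblA02 3 1 = 0 := rfl
lemma tblA02_32 : tblA02 3 2 = 0 := rfl
lemma tblA02_33 : tblA02 3 3 = 0 := rfl
lemma tblA02_34 : tblA02 3 4 = 0 := rfl
lemma tblA02_40 : tblA02 4 0 = 0 := rfl
lemma tblA02_41 : tblA02 4 1 = 0 := rfl
lemma tblA02_42 : tblA02 4 2 = 0 := rfl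
lemma tblA02_43 : tblA02 4 3 = 0 := rfl
lemma tblA02_44 : tblA02 4 4 = 0 := rfl
lemma tblA05_00 : tblA05 0 0 = e 1 := rfl
lemma tblA05_01 : tblA05 0 1 = e 2 := rfl
lemma tblA05_02 : tblA05 0 2 = e 3 := rfl
lemma tblA05_03 : tblA05 0 3 = 0 := rfl
lemma tblA05_04 : tblA05 0 4 = 0 := rfl
lemma tblA05_10 : tblA05 1 0 = e 2 := rfl
lemma tblA05_11 : tblA05 1 1 = e 3 := rfl
lemma tblA05_12 : tblA05 1 2 = 0 := rfl
lemma tblA05_13 : tblA05 1 3 = 0 := rfl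
lemma tblA05_14 : tblA05 1 4 = 0 := rfl
lemma tblA05_20 : tblA05 2 0 = e 3 := rfl
lemma tblA05_21 : tblA05 2 1 = 0 := rfl
lemma tblA05_22 : tblA05 2 2 = 0 := rfl
lemma tblA05_23 : tblA05 2 3 = 0 := rfl
lemma tblA05_24 : tblA05 2 4 = 0 := rfl
lemma tblA05_30 : tblA05 3 0 = 0 := rfl
lemma tblA05_31 : tblA05 3 1 = 0 := rfl
lemma tblA05_32 : tblA05 3 2 = 0 := rfl
lemma tblA05_33 : tblA05 3 3 = 0 := rfl
lemma tblA05_34 : tblA05 3 4 = 0 := rfl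
lemma tblA05_40 : tblA05 4 0 = 0 := rfl
lemma tblA05_41 : tblA05 4 1 = 0 := rfl
lemma tblA05_42 : tblA05 4 2 = 0 := rfl
lemma tblA05_43 : tblA05 4 3 = 0 := rfl
lemma tblA05_44 : tblA05 4 4 = 0 := rfl

noncomputable def gfun (t : ℂ) : Vn 5 →ₗ[ℂ] Vn 5 where
  toFun x := ![t⁻¹ * x 0, t⁻¹^2 * x 2, t⁻¹^3 * x 3, t⁻¹^4 * x 4, t⁻¹^3 * x 1]
  map_add' x y := by funext i; fin_cases i <;> simp <;> ring
  map_smul' c x := by funext i; fin_cases i <;> simp <;> ring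

def hfun (t : ℂ) : Vn 5 →ₗ[ℂ] Vn 5 where
  toFun x := ![t * x 0, t^3 * x 4, t^2 * x 1, t^3 * x 2, t^4 * x 3]
  map_add' x y := by funext i; fin_cases i <;> simp <;> ring
  map_smul' c x := by funext i; fin_cases i <;> simp <;> ring

noncomputable def G (t : ℂ) (ht : t ≠ 0) : Vn 5 ≃L[ℂ] Vn 5 :=
  (LinearEquiv.ofLinear (gfun t) (hfun t)
    (by apply LinearMap.ext; intro x; funext i; fin_cases i <;>
        simp [gfun, hfun] <;> field_simp)
    (by apply LinearMap.ext; intro x; funext i; fin_cases i <;>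
        simp [gfun, hfun] <;> field_simp)).toContinuousLinearEquiv

lemma G_apply (t : ℂ) (ht : t ≠ 0) (x : Vn 5) : G t ht x = gfun t x := rfl
lemma G_symm_apply (t : ℂ) (ht : t ≠ 0) (x : Vn 5) : (G t ht).symm x = hfun t x := rfl

lemma hfun_e (t : ℂ) :
    hfun t (e 0) = t • e 0 ∧ hfun t (e 1) = t^2 • e 2 ∧ hfun t (e 2) = t^3 • e 3 ∧
    hfun t (e 3) = t^4 • e 4 ∧ hfun t (e 4) = t^3 • e 1 := by
  refine ⟨?_, ?_, ?_, ?_, ?_⟩ <;>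
    (funext i; fin_cases i <;> simp [hfun, e, Pi.single_apply])

lemma gfun_e (t : ℂ) :
    gfun t (e 0) = t⁻¹ • e 0 ∧ gfun t (e 2) = t⁻¹^2 • e 1 ∧ gfun t (e 3) = t⁻¹^3 • e 2 ∧
    gfun t (e 4) = t⁻¹^4 • e 3 ∧ gfun t (e 1) = t⁻¹^3 • e 4 := by
  refine ⟨?_, ?_, ?_, ?_, ?_⟩ <;>
    (funext i; fin_cases i <;> simp [gfun, e, Pi.single_apply])

/-- The perturbation bilinear map `(x, y) ↦ x₄ • (y₄ • e₃)`. -/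
noncomputable def P : Bil 5 :=
  (ContinuousLinearMap.proj (4 : Fin 5)).smulRight
    ((ContinuousLinearMap.proj (4 : Fin 5)).smulRight (e 3))

lemma P_apply (x y : Vn 5) : P x y = x 4 • (y 4 • e 3) := rfl

set_option maxHeartbeats 2000000 in
lemma key (μ lam : Bil 5)
    (hμ : ∀ i j : Fin 5, μ (e i) (e j) = tblA02 i j)
    (hlam : ∀ i j : Fin 5, lam (e i) (e j) = tblA05 i j)
    (t : ℂ) (ht : t ≠ 0) :
    act (G t ht) μ = lam + t^2 • P := by
  obtain ⟨h0, h1, h2, h3, h4⟩ := hfun_e t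
  obtain ⟨g0, g2, g3, g4, g1⟩ := gfun_e t
  apply bil_ext
  intro i j
  rw [act_apply, ContinuousLinearMap.add_apply, ContinuousLinearMap.add_apply,
    ContinuousLinearMap.smul_apply, ContinuousLinearMap.smul_apply, hlam,
    G_symm_apply, G_symm_apply, G_apply, P_apply]
  fin_cases i <;> fin_cases j <;>
    simp [h0, h1, h2, h3, h4, map_smul, smul_smul, hμ,
      tblA02_00, tblA02_01, tblA02_02, tblA02_03, tblA02_04,
      tblA02_10, tblA02_11, tblA02_12, tblA02_13, tblA02_14,
      tblA02_20, tblA02_21, tblA02_22, tblA02_23, tblA02_24,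
      tblA02_30, tblA02_31, tblA02_32, tblA02_33, tblA02_34,
      tblA02_40, tblA02_41, tblA02_42, tblA02_43, tblA02_44,
      tblA05_00, tblA05_01, tblA05_02, tblA05_03, tblA05_04,
      tblA05_10, tblA05_11, tblA05_12, tblA05_13, tblA05_14,
      tblA05_20, tblA05_21, tblA05_22, tblA05_23, tblA05_24,
      tblA05_30, tblA05_31, tblA05_32, tblA05_33, tblA05_34,
      tblA05_40, tblA05_41, tblA05_42, tblA05_43, tblA05_44,
      g0, g1, g2, g3, g4, e_at] <;>
    match_scalars <;> field_simp <;> ring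

set_option maxHeartbeats 2000000 in
set_option synthInstance.maxHeartbeats 200000 in
/-- The $5$-dimensional nilpotent commutative associative algebra `𝐀02` degenerates to
`𝐀05`: the structure `λ` of `𝐀05` lies in the closure of
the `GL(5, ℂ)`-orbit `O(μ)` of the structure `μ` of `𝐀02`. -/
theorem A02_deg_A05 (μ lam : Bil 5)
    (hμ : ∀ i j : Fin 5, μ (e i) (e j) = tblA02 i j)
    (hlam : ∀ i j : Fin 5, lam (e i) (e j) = tblA05 i j) :
    lam ∈ closure (orbit μ) := by
  have hne : ∀ n : ℕ, ((n : ℂ) + 1)⁻¹ ≠ 0 := fun n =>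
    inv_ne_zero (Nat.cast_add_one_ne_zero n)
  set c : ℕ → ℂ := fun n => ((n : ℂ) + 1)⁻¹ with hc
  have hmem : ∀ n : ℕ, lam + (c n)^2 • P ∈ orbit μ := by
    intro n
    exact ⟨G (c n) (hne n), (key μ lam hμ hlam (c n) (hne n)).symm⟩
  have htend : Filter.Tendsto (fun n : ℕ => lam + (c n)^2 • P) Filter.atTop (nhds lam) := by
    have h1 : Filter.Tendsto c Filter.atTop (nhds 0) := by
      have hr : Filter.Tendsto (fun n : ℕ => (1 : ℝ) / ((n : ℝ) + 1)) Filter.atTop (nhds 0) :=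
        tendsto_one_div_add_atTop_nhds_zero_nat
      have h2 := (Complex.continuous_ofReal.tendsto 0).comp hr
      have heq : (Complex.ofReal ∘ fun n : ℕ => (1 : ℝ) / ((n : ℝ) + 1)) = c := by
        funext n
        simp only [hc, Function.comp_apply]
        push_cast
        rw [one_div]
      rwa [heq, Complex.ofReal_zero] at h2
    have h2 : Filter.Tendsto (fun n => (c n)^2 • P) Filter.atTop (nhds ((0:ℂ)^2 • P)) :=
      (h1.pow 2).smul_const P
    have h3 := ((Homeomorph.addLeft lam).continuous.tendsto _).comp h2
    have h4 : Filter.Tendsto (fun n : ℕ => lam + (c n)^2 • P) Filter.atTop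
        (nhds (lam + (0:ℂ)^2 • P)) := h3
    have hz : ((0:ℂ)^2 • P : Bil 5) = 0 := by
      apply ContinuousLinearMap.ext; intro x
      apply ContinuousLinearMap.ext; intro y
      simp
    rw [hz] at h4
    have hz2 : (lam + 0 : Bil 5) = lam := by
      apply ContinuousLinearMap.ext; intro x
      apply ContinuousLinearMap.ext; intro y
      simp
    rwa [hz2] at h4
  exact mem_closure_of_tendsto htend (Filter.Eventually.of_forall hmem)
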